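/- Let X be a Banach space, C ⊆ X a bounded closed convex set, F : C → 𝒞𝒦(C) a nonexpansive set-valued mapping, ξ ∈ C, 0 < ρ < r < R, and K a convex compact subset of C with h(K, F(ξ)) < ρ. Then there exists a mapping G : C → 𝒞𝒦(C) such that (1) G(ξ) = K; (2) G(x) = F(x) for all x ∈ C ∖ B(ξ, R); (3) Lip G ≤ max{ (R/(R−r)) Lip F, Lip F + ρ/r }; and (4) h(F(x), G(x)) ≤ 2r for all x ∈ C. -/

import Mathlib

open Metric Set

section PerturbAux

open Metric Set EMetric Pointwise
set_option linter.unusedSectionVars false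
set_option linter.unusedVariables false
open scoped ENNReal NNReal

variable {X : Type*} [NormedAddCommGroup X] [NormedSpace ℝ X]

lemma aux_hausdorffEdist_add_left (S A B : Set X) (hS : S.Nonempty) :
    hausdorffEDist (S + A) (S + B) ≤ hausdorffEDist A B := by
  have key : ∀ A B : Set X, ∀ x ∈ S + A, infEDist x (S + B) ≤ hausdorffEDist A B := by
    intro A B x hx
    rw [Set.mem_add] at hx
    obtain ⟨s₀, hs₀, a, ha, rfl⟩ := hx
    have him : (s₀ + ·) '' B ⊆ S + B := by
      rintro _ ⟨b, hb, rfl⟩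
      exact Set.add_mem_add hs₀ hb
    have hiso : Isometry (s₀ + · : X → X) :=
      Isometry.of_dist_eq fun a b => dist_add_left s₀ a b
    calc infEDist (s₀ + a) (S + B) ≤ infEDist (s₀ + a) ((s₀ + ·) '' B) := infEDist_anti him
      _ = infEDist a B := infEDist_image hiso
      _ ≤ hausdorffEDist A B := infEDist_le_hausdorffEDist_of_mem ha
  refine hausdorffEDist_le_of_infEDist (key A B) ?_
  intro x hx
  rw [hausdorffEDist_comm]
  exact key B A x hx

lemma aux_hausdorffEdist_smul (c : ℝ) (A B : Set X) (hA : A.Nonempty) (hB : B.Nonempty) :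
    hausdorffEDist (c • A) (c • B) ≤ (‖c‖₊ : ℝ≥0∞) * hausdorffEDist A B := by
  rcases eq_or_ne c 0 with rfl | hc
  · rw [zero_smul_set hA, zero_smul_set hB, hausdorffEDist_self]
    exact zero_le
  · have key : ∀ A B : Set X, ∀ x ∈ c • A, infEDist x (c • B) ≤ ‖c‖₊ * hausdorffEDist A B := by
      intro A B x hx
      obtain ⟨a, ha, rfl⟩ := hx
      rw [infEDist_smul₀ hc, ENNReal.smul_def, smul_eq_mul]
      exact mul_le_mul_right (infEDist_le_hausdorffEDist_of_mem ha) _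
    refine hausdorffEDist_le_of_infEDist (key A B) ?_
    intro x hx
    rw [hausdorffEDist_comm]
    exact key B A x hx

lemma aux_hd_add_left (S A B : Set X) (hS : S.Nonempty) (hA : A.Nonempty) (hB : B.Nonempty)
    (bA : Bornology.IsBounded A) (bB : Bornology.IsBounded B) :
    hausdorffDist (S + A) (S + B) ≤ hausdorffDist A B := by
  have fin : hausdorffEDist A B ≠ ⊤ :=
    hausdorffEDist_ne_top_of_nonempty_of_bounded hA hB bA bB
  exact ENNReal.toReal_mono fin (aux_hausdorffEdist_add_left S A B hS)

lemma aux_hd_smul (c : ℝ) (hc : 0 ≤ c) (A B : Set X) (hA : A.Nonempty) (hB : B.Nonempty)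
    (bA : Bornology.IsBounded A) (bB : Bornology.IsBounded B) :
    hausdorffDist (c • A) (c • B) ≤ c * hausdorffDist A B := by
  have fin : hausdorffEDist A B ≠ ⊤ :=
    hausdorffEDist_ne_top_of_nonempty_of_bounded hA hB bA bB
  have fin2 : (‖c‖₊ : ℝ≥0∞) * hausdorffEDist A B ≠ ⊤ := by
    exact ENNReal.mul_ne_top ENNReal.coe_ne_top fin
  have h := ENNReal.toReal_mono fin2 (aux_hausdorffEdist_smul c A B hA hB)
  rw [ENNReal.toReal_mul] at h
  simpa [hausdorffDist, Real.norm_eq_abs, abs_of_nonneg hc] using h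

noncomputable def pg (r R t : ℝ) : ℝ := max 0 (min 1 (R*(t-r)/((R-r)*t)))

variable {r R : ℝ}

lemma pg_nonneg (r R t : ℝ) : 0 ≤ pg r R t := le_max_left _ _

lemma pg_le_one (r R t : ℝ) : pg r R t ≤ 1 :=
  max_le zero_le_one (min_le_left _ _)

lemma pg_of_le (hr : 0 < r) (hrR : r < R) {t : ℝ} (ht0 : 0 ≤ t) (ht : t ≤ r) :
    pg r R t = 0 := by
  have h1 : R*(t-r)/((R-r)*t) ≤ 0 := by
    apply div_nonpos_of_nonpos_of_nonneg
    · nlinarith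
    · nlinarith
  have : min 1 (R*(t-r)/((R-r)*t)) ≤ 0 := (min_le_right _ _).trans h1
  exact max_eq_left this

lemma pg_of_ge (hr : 0 < r) (hrR : r < R) {t : ℝ} (ht : R ≤ t) :
    pg r R t = 1 := by
  have ht0 : 0 < t := lt_of_lt_of_le (hr.trans hrR) ht
  have h1 : (1:ℝ) ≤ R*(t-r)/((R-r)*t) := by
    rw [le_div_iff₀ (by nlinarith)]
    nlinarith
  rw [pg, min_eq_left h1, max_eq_right zero_le_one]

lemma pg_of_between (hr : 0 < r) (hrR : r < R) {t : ℝ} (h1 : r ≤ t) (h2 : t ≤ R) :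
    pg r R t = R*(t-r)/((R-r)*t) := by
  have ht0 : 0 < t := lt_of_lt_of_le hr h1
  have hq0 : 0 ≤ R*(t-r)/((R-r)*t) := by
    apply div_nonneg <;> nlinarith
  have hq1 : R*(t-r)/((R-r)*t) ≤ 1 := by
    rw [div_le_one (by nlinarith)]
    nlinarith
  rw [pg, min_eq_right hq1, max_eq_right hq0]

lemma pg_mul_between (hr : 0 < r) (hrR : r < R) {t : ℝ} (h1 : r ≤ t) (h2 : t ≤ R) :
    pg r R t * t = R*(t-r)/(R-r) := by
  have ht0 : 0 < t := lt_of_lt_of_le hr h1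
  rw [pg_of_between hr hrR h1 h2, div_mul_eq_mul_div, mul_div_mul_right _ _ ht0.ne']

lemma pg_mul_self_le (hr : 0 < r) (hrR : r < R) {t : ℝ} (ht0 : 0 ≤ t) :
    pg r R t * t ≤ R * max 0 (t-r) / (R-r) := by
  rcases le_or_gt t r with h | h
  · rw [pg_of_le hr hrR ht0 h]
    have : 0 ≤ R * max 0 (t-r) / (R-r) := by
      apply div_nonneg
      · exact mul_nonneg (by nlinarith) (le_max_left _ _)
      · nlinarith
    linarith
  · rw [max_eq_right (by nlinarith : (0:ℝ) ≤ t - r)]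
    rcases le_or_gt t R with h2 | h2
    · rw [pg_mul_between hr hrR h.le h2]
    · rw [pg_of_ge hr hrR h2.le, one_mul, le_div_iff₀ (by nlinarith)]
      nlinarith

lemma sub_pg_mul_self_le (hr : 0 < r) (hrR : r < R) {t : ℝ} (ht0 : 0 ≤ t) :
    t - pg r R t * t ≤ r := by
  have hRr : (0:ℝ) < R - r := by nlinarith
  rcases le_or_gt t r with h | h
  · have := pg_nonneg r R t
    nlinarith
  · rcases le_or_gt t R with h2 | h2
    · rw [pg_mul_between hr hrR h.le h2]
      have hd : t - r ≤ R*(t-r)/(R-r) := by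
        rw [le_div_iff₀ hRr]; nlinarith
      linarith
    · rw [pg_of_ge hr hrR h2.le]
      nlinarith

lemma pg_mul_mono (hr : 0 < r) (hrR : r < R) {t s : ℝ} (ht0 : 0 ≤ t) (hts : t ≤ s) :
    pg r R t * t ≤ pg r R s * s := by
  have hRr : (0:ℝ) < R - r := by nlinarith
  have hs0 : 0 ≤ s := ht0.trans hts
  rcases le_or_gt t r with h | h
  · rw [pg_of_le hr hrR ht0 h, zero_mul]
    exact mul_nonneg (pg_nonneg r R s) hs0
  · rcases le_or_gt s R with h2 | h2
    · rw [pg_mul_between hr hrR h.le (hts.trans h2), pg_mul_between hr hrR (h.le.trans hts) h2,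
        div_le_div_iff₀ hRr hRr]
      nlinarith [mul_nonneg (mul_nonneg (show (0:ℝ) ≤ R by nlinarith) hRr.le) (show (0:ℝ) ≤ s - t by linarith)]
    · rcases le_or_gt t R with h3 | h3
      · rw [pg_mul_between hr hrR h.le h3, pg_of_ge hr hrR h2.le, one_mul,
          div_le_iff₀ hRr]
        nlinarith
      · rw [pg_of_ge hr hrR h3.le, pg_of_ge hr hrR h2.le]
        nlinarith

lemma pp_lip (hr : 0 < r) (hrR : r < R) {t s : ℝ} (ht0 : 0 ≤ t) (hts : t ≤ s) :
    pg r R s * s - pg r R t * t ≤ R/(R-r) * (s - t) := by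
  have hRr : (0:ℝ) < R - r := by nlinarith
  have hR0 : (0:ℝ) < R := hr.trans hrR
  have hs0 : 0 ≤ s := ht0.trans hts
  rcases le_or_gt s r with h | h
  · rw [pg_of_le hr hrR hs0 h, pg_of_le hr hrR ht0 (hts.trans h), zero_mul, zero_mul]
    rw [sub_zero]
    apply mul_nonneg
    · positivity
    · linarith
  · rcases le_or_gt t r with h1 | h1
    · rw [pg_of_le hr hrR ht0 h1, zero_mul, sub_zero]
      rcases le_or_gt s R with h2 | h2
      · rw [pg_mul_between hr hrR h.le h2, div_mul_eq_mul_div, div_le_div_iff₀ hRr hRr]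
        nlinarith [mul_nonneg (mul_nonneg hR0.le hRr.le) (show (0:ℝ) ≤ r - t by linarith)]
      · rw [pg_of_ge hr hrR h2.le, one_mul, div_mul_eq_mul_div, le_div_iff₀ hRr]
        nlinarith [mul_le_mul_of_nonneg_left h1 hR0.le, mul_le_mul_of_nonneg_left h2.le hr.le]
    · rcases le_or_gt s R with h2 | h2
      · rw [pg_mul_between hr hrR h.le h2, pg_mul_between hr hrR h1.le (hts.trans h2),
          div_sub_div_same, div_mul_eq_mul_div, div_le_div_iff₀ hRr hRr]
        nlinarith
      · rcases le_or_gt t R with h3 | h3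
        · rw [pg_of_ge hr hrR h2.le, one_mul, pg_mul_between hr hrR h1.le h3,
            div_mul_eq_mul_div, sub_le_iff_le_add, ← add_div, le_div_iff₀ hRr]
          nlinarith [mul_le_mul_of_nonneg_left h2.le hr.le]
        · rw [pg_of_ge hr hrR h2.le, pg_of_ge hr hrR h3.le, one_mul, one_mul,
            div_mul_eq_mul_div, le_div_iff₀ hRr]
          nlinarith [mul_le_mul_of_nonneg_left (show r ≤ R by linarith) (show (0:ℝ) ≤ s - t by linarith)]

lemma pg_mono (hr : 0 < r) (hrR : r < R) {t s : ℝ} (ht0 : 0 ≤ t) (hts : t ≤ s) :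
    pg r R t ≤ pg r R s := by
  have hRr : (0:ℝ) < R - r := by nlinarith
  have hR0 : (0:ℝ) < R := hr.trans hrR
  rcases le_or_gt t r with h | h
  · rw [pg_of_le hr hrR ht0 h]
    exact pg_nonneg r R s
  · rcases le_or_gt s R with h2 | h2
    · rw [pg_of_between hr hrR h.le (hts.trans h2), pg_of_between hr hrR (h.le.trans hts) h2,
        div_le_div_iff₀ (by nlinarith) (by nlinarith)]
      nlinarith [mul_nonneg (mul_nonneg (mul_nonneg hR0.le hRr.le) hr.le) (show (0:ℝ) ≤ s - t by linarith)]
    · rw [pg_of_ge hr hrR h2.le]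
      exact pg_le_one r R t

lemma pg_lip_aux (hr : 0 < r) (hrR : r < R) (u v : X) (huv : ‖v‖ ≤ ‖u‖) :
    ‖pg r R ‖u‖ • u - pg r R ‖v‖ • v‖ ≤ R/(R-r) * ‖u - v‖ := by
  have hRr : (0:ℝ) < R - r := by nlinarith
  have hR0 : (0:ℝ) < R := hr.trans hrR
  set s := ‖u‖ with hs
  set t := ‖v‖ with ht
  have ht0 : 0 ≤ t := norm_nonneg v
  have hgm : pg r R t ≤ pg r R s := pg_mono hr hrR ht0 huv
  have step1 : ‖pg r R s • u - pg r R t • v‖ ≤ pg r R s * ‖u - v‖ + (pg r R s - pg r R t) * t := by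
    have : pg r R s • u - pg r R t • v = pg r R s • (u - v) + (pg r R s - pg r R t) • v := by
      rw [smul_sub, sub_smul]; abel
    rw [this]
    refine (norm_add_le _ _).trans ?_
    rw [norm_smul, norm_smul, Real.norm_eq_abs, Real.norm_eq_abs,
      abs_of_nonneg (pg_nonneg r R s), abs_of_nonneg (by linarith : (0:ℝ) ≤ pg r R s - pg r R t)]
  refine step1.trans ?_
  have f2 : (1:ℝ) ≤ R/(R-r) := by rw [le_div_iff₀ hRr]; nlinarith
  have f3 : s - t ≤ ‖u - v‖ := by
    have := norm_sub_norm_le u v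
    linarith
  have f4 : pg r R s * s - pg r R t * t ≤ R/(R-r) * (s - t) := pp_lip hr hrR ht0 huv
  have f5 : pg r R s ≤ 1 := pg_le_one r R s
  nlinarith [mul_nonneg (show (0:ℝ) ≤ R/(R-r) - pg r R s by linarith)
    (show (0:ℝ) ≤ ‖u - v‖ - (s - t) by linarith)]

lemma pg_lip (hr : 0 < r) (hrR : r < R) (u v : X) :
    ‖pg r R ‖u‖ • u - pg r R ‖v‖ • v‖ ≤ R/(R-r) * ‖u - v‖ := by
  rcases le_total ‖v‖ ‖u‖ with h | h
  · exact pg_lip_aux hr hrR u v h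
  · rw [norm_sub_rev, norm_sub_rev u v]
    exact pg_lip_aux hr hrR v u h


end PerturbAux

open EMetric Pointwise
open scoped ENNReal NNReal

set_option maxHeartbeats 1000000

/-- `F` maps `C` into the hyperspace `𝒞𝒦(C)` of nonempty convex compact subsets of `C`. -/
def MapsIntoCK {X : Type*} [NormedAddCommGroup X] [NormedSpace ℝ X]
    (C : Set X) (F : X → Set X) : Prop :=
  ∀ x ∈ C, (F x).Nonempty ∧ IsCompact (F x) ∧ Convex ℝ (F x) ∧ F x ⊆ C

/-- Perturbation lemma: given a nonexpansive `F : C → 𝒞𝒦(C)` with Lipschitz constant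
`L ≤ 1`, a point `ξ ∈ C`, parameters `0 < ρ < r < R` and a nonempty convex compact `K ⊆ C`
with `h(K, F(ξ)) < ρ`, there is `G : C → 𝒞𝒦(C)` with `G(ξ) = K`, `G = F` off `B(ξ, R)`,
`Lip G ≤ max{(R/(R−r))L, L + ρ/r}` and `h(F(x), G(x)) ≤ 2r` on `C`. -/
theorem perturbation_lemma {X : Type*} [NormedAddCommGroup X] [NormedSpace ℝ X]
    [CompleteSpace X] (C : Set X) (hCb : Bornology.IsBounded C) (hCcl : IsClosed C)
    (hCco : Convex ℝ C)
    (F : X → Set X) (hF : MapsIntoCK C F)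
    (L : ℝ) (hL0 : 0 ≤ L) (hL1 : L ≤ 1)
    (hFL : ∀ x ∈ C, ∀ y ∈ C, hausdorffDist (F x) (F y) ≤ L * ‖x - y‖)
    (ξ : X) (hξ : ξ ∈ C) (ρ r R : ℝ) (hρ : 0 < ρ) (hρr : ρ < r) (hrR : r < R)
    (K : Set X) (hKne : K.Nonempty) (hKcp : IsCompact K) (hKco : Convex ℝ K) (hKC : K ⊆ C)
    (hKF : hausdorffDist K (F ξ) < ρ) :
    ∃ G : X → Set X, MapsIntoCK C G ∧
      G ξ = K ∧
      (∀ x ∈ C \ Metric.ball ξ R, G x = F x) ∧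
      (∀ x ∈ C, ∀ y ∈ C,
        hausdorffDist (G x) (G y) ≤ max (R / (R - r) * L) (L + ρ / r) * ‖x - y‖) ∧
      (∀ x ∈ C, hausdorffDist (F x) (G x) ≤ 2 * r) := by
  have hr : 0 < r := hρ.trans hρr
  have hRr : (0:ℝ) < R - r := by linarith
  have hR0 : (0:ℝ) < R := by linarith
  set M := max (R / (R - r) * L) (L + ρ / r) with hMdef
  have hM1 : R / (R - r) * L ≤ M := le_max_left _ _
  have hM2 : L + ρ / r ≤ M := le_max_right _ _
  have hM0 : 0 ≤ M := le_trans (by positivity) hM1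
  have hMρr : ρ / r ≤ M := by
    have : ρ / r ≤ L + ρ / r := by linarith
    linarith
  -- the scaling function lam
  set lam : X → ℝ := fun x => (r - min ‖x - ξ‖ r) / r with hlam
  have lam_nonneg : ∀ x, 0 ≤ lam x := fun x =>
    div_nonneg (by simp [sub_nonneg, min_le_right]) hr.le
  have lam_le_one : ∀ x, lam x ≤ 1 := fun x => by
    rw [hlam]
    simp only
    rw [div_le_one hr]
    have : 0 ≤ min ‖x - ξ‖ r := le_min (norm_nonneg _) hr.le
    linarith
  have lam_xi : lam ξ = 1 := by
    rw [hlam]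
    simp only [sub_self, norm_zero]
    rw [min_eq_left hr.le, sub_zero, div_self hr.ne']
  have lam_zero : ∀ x, r ≤ ‖x - ξ‖ → lam x = 0 := fun x hx => by
    rw [hlam]
    simp only
    rw [min_eq_right hx, sub_self, zero_div]
  have lam_pos_lt : ∀ x, 0 < lam x → ‖x - ξ‖ < r := fun x hx => by
    by_contra h
    rw [lam_zero x (not_lt.1 h)] at hx
    exact lt_irrefl _ hx
  have lam_anti : ∀ x y : X, ‖x - ξ‖ ≤ ‖y - ξ‖ → lam y ≤ lam x := fun x y h => by
    rw [hlam]
    simp only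
    have hm : min ‖x - ξ‖ r ≤ min ‖y - ξ‖ r := min_le_min h le_rfl
    rw [div_le_div_iff_of_pos_right hr]
    linarith
  -- the retraction
  set Φf : X → X := fun x => ξ + pg r R ‖x - ξ‖ • (x - ξ) with hΦf
  have Φmem : ∀ x ∈ C, Φf x ∈ C := by
    intro x hx
    have h1 : Φf x = (1 - pg r R ‖x - ξ‖) • ξ + pg r R ‖x - ξ‖ • x := by
      rw [hΦf]
      simp only
      rw [smul_sub, sub_smul, one_smul]
      abel
    rw [h1]
    exact hCco hξ hx (by linarith [pg_le_one r R ‖x - ξ‖]) (pg_nonneg _ _ _) (by ring)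
  have Φxi_eq : ∀ x : X, ‖x - ξ‖ < r → Φf x = ξ := fun x hx => by
    rw [hΦf]
    simp only
    rw [pg_of_le hr hrR (norm_nonneg _) hx.le, zero_smul, add_zero]
  have Φid : ∀ x : X, R ≤ ‖x - ξ‖ → Φf x = x := fun x hx => by
    rw [hΦf]
    simp only
    rw [pg_of_ge hr hrR hx, one_smul, add_sub_cancel]
  have Φdist : ∀ x : X, ‖x - Φf x‖ ≤ r := fun x => by
    have h1 : x - Φf x = (1 - pg r R ‖x - ξ‖) • (x - ξ) := by
      rw [hΦf, sub_smul, one_smul]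
      simp only
      abel
    rw [h1, norm_smul, Real.norm_eq_abs,
      abs_of_nonneg (by linarith [pg_le_one r R ‖x - ξ‖] : (0:ℝ) ≤ 1 - pg r R ‖x - ξ‖)]
    have h2 := sub_pg_mul_self_le hr hrR (norm_nonneg (x - ξ))
    nlinarith [norm_nonneg (x - ξ)]
  have Φlip : ∀ x y : X, ‖Φf x - Φf y‖ ≤ R / (R - r) * ‖x - y‖ := fun x y => by
    have h1 : Φf x - Φf y = pg r R ‖x - ξ‖ • (x - ξ) - pg r R ‖y - ξ‖ • (y - ξ) := by
      rw [hΦf]; simp only; abel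
    have h2 := pg_lip (X := X) hr hrR (x - ξ) (y - ξ)
    have h3 : (x - ξ) - (y - ξ) = x - y := by abel
    rw [h3] at h2
    rw [h1]
    exact h2
  -- the map G
  set G : X → Set X := fun x => lam x • K + (1 - lam x) • F (Φf x) with hG
  have hFne : ∀ x ∈ C, (F x).Nonempty := fun x hx => (hF x hx).1
  have hFcp : ∀ x ∈ C, IsCompact (F x) := fun x hx => (hF x hx).2.1
  have hFco : ∀ x ∈ C, Convex ℝ (F x) := fun x hx => (hF x hx).2.2.1
  have hFsub : ∀ x ∈ C, F x ⊆ C := fun x hx => (hF x hx).2.2.2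
  have hGck : MapsIntoCK C G := by
    intro x hx
    have hΦx := Φmem x hx
    refine ⟨(hKne.smul_set).add ((hFne _ hΦx).smul_set), ?_, ?_, ?_⟩
    · exact (hKcp.smul _).add ((hFcp _ hΦx).smul _)
    · exact (hKco.smul _).add ((hFco _ hΦx).smul _)
    · rintro z hz
      rw [Set.mem_add] at hz
      obtain ⟨_, ⟨k, hk, rfl⟩, _, ⟨f, hf, rfl⟩, rfl⟩ := hz
      exact hCco (hKC hk) (hFsub _ hΦx hf) (lam_nonneg x)
        (by linarith [lam_le_one x]) (by ring)
  have hGx : ∀ x, G x = lam x • K + (1 - lam x) • F (Φf x) := fun x => by rw [hG]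
  have hfin : ∀ S T : Set X, S.Nonempty → T.Nonempty → Bornology.IsBounded S →
      Bornology.IsBounded T → EMetric.hausdorffEdist S T ≠ ⊤ := fun S T h1 h2 h3 h4 =>
    hausdorffEdist_ne_top_of_nonempty_of_bounded h1 h2 h3 h4
  have hcomb_sub : ∀ (c : ℝ), 0 ≤ c → c ≤ 1 → ∀ S T : Set X, S ⊆ C → T ⊆ C →
      c • S + (1 - c) • T ⊆ C := by
    intro c hc0 hc1 S T hS hT z hz
    rw [Set.mem_add] at hz
    obtain ⟨_, ⟨s, hs, rfl⟩, _, ⟨t, ht, rfl⟩, rfl⟩ := hz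
    exact hCco (hS hs) (hT ht) hc0 (by linarith) (by ring)
  have hKb : Bornology.IsBounded K := hCb.subset hKC
  refine ⟨G, hGck, ?_, ?_, ?_, ?_⟩
  · -- G ξ = K
    rw [hGx, lam_xi, one_smul, sub_self, zero_smul_set (hFne _ (Φmem ξ hξ)), add_zero]
  · -- G = F off the ball
    rintro x ⟨hxC, hxB⟩
    have hxR : R ≤ ‖x - ξ‖ := by
      rw [Metric.mem_ball, dist_eq_norm] at hxB
      linarith [not_lt.1 hxB]
    rw [hGx, lam_zero x (le_trans (by linarith) hxR), Φid x hxR, zero_smul_set hKne,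
      sub_zero, one_smul, zero_add]
  · -- Lipschitz estimate
    have key : ∀ x ∈ C, ∀ y ∈ C, ‖x - ξ‖ ≤ ‖y - ξ‖ →
        hausdorffDist (G x) (G y) ≤ M * ‖x - y‖ := by
      intro x hx y hy hxy
      have hΦxC := Φmem x hx
      have hΦyC := Φmem y hy
      have hAne := hFne _ hΦxC
      have hBne := hFne _ hΦyC
      have hAb : Bornology.IsBounded (F (Φf x)) := hCb.subset (hFsub _ hΦxC)
      have hBb : Bornology.IsBounded (F (Φf y)) := hCb.subset (hFsub _ hΦyC)
      have hAco := hFco _ hΦxC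
      have hlxy : lam y ≤ lam x := lam_anti x y hxy
      have hllnn : 0 ≤ lam x - lam y := by linarith
      have h1lx : 0 ≤ 1 - lam x := by linarith [lam_le_one x]
      have h1ly : 0 ≤ 1 - lam y := by linarith [lam_le_one y]
      have e1 : lam x • K + (1 - lam x) • F (Φf x) =
          lam y • K + ((lam x - lam y) • K + (1 - lam x) • F (Φf x)) := by
        rw [← add_assoc, ← Convex.add_smul hKco (lam_nonneg y) hllnn,
          show lam y + (lam x - lam y) = lam x from by ring]
      have e2 : lam y • K + (1 - lam y) • F (Φf x) =
          lam y • K + ((lam x - lam y) • F (Φf x) + (1 - lam x) • F (Φf x)) := by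
        rw [← Convex.add_smul hAco hllnn h1lx,
          show lam x - lam y + (1 - lam x) = 1 - lam y from by ring]
      have t1 : hausdorffDist (G x) (lam y • K + (1 - lam y) • F (Φf x)) ≤
          (lam x - lam y) * hausdorffDist K (F (Φf x)) := by
        rw [hGx, e1, e2]
        refine (aux_hd_add_left _ _ _ (hKne.smul_set)
          ((hKne.smul_set).add (hAne.smul_set)) ((hAne.smul_set).add (hAne.smul_set))
          (isBounded_add (hKb.smul₀ _) (hAb.smul₀ _))
          (isBounded_add (hAb.smul₀ _) (hAb.smul₀ _))).trans ?_
        rw [add_comm ((lam x - lam y) • K), add_comm ((lam x - lam y) • F (Φf x))]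
        refine (aux_hd_add_left _ _ _ (hAne.smul_set) (hKne.smul_set) (hAne.smul_set)
          (hKb.smul₀ _) (hAb.smul₀ _)).trans ?_
        exact aux_hd_smul _ hllnn K (F (Φf x)) hKne hAne hKb hAb
      have t2 : hausdorffDist (lam y • K + (1 - lam y) • F (Φf x)) (G y) ≤
          (1 - lam y) * hausdorffDist (F (Φf x)) (F (Φf y)) := by
        rw [hGx]
        refine (aux_hd_add_left _ _ _ (hKne.smul_set) (hAne.smul_set) (hBne.smul_set)
          (hAb.smul₀ _) (hBb.smul₀ _)).trans ?_
        exact aux_hd_smul _ h1ly _ _ hAne hBne hAb hBb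
      have hmidne : (lam y • K + (1 - lam y) • F (Φf x)).Nonempty :=
        (hKne.smul_set).add (hAne.smul_set)
      have hmidsub : lam y • K + (1 - lam y) • F (Φf x) ⊆ C :=
        hcomb_sub _ (lam_nonneg y) (lam_le_one y) _ _ hKC (hFsub _ hΦxC)
      have tri : hausdorffDist (G x) (G y) ≤
          hausdorffDist (G x) (lam y • K + (1 - lam y) • F (Φf x)) +
          hausdorffDist (lam y • K + (1 - lam y) • F (Φf x)) (G y) :=
        hausdorffDist_triangle (hfin _ _ (hGck x hx).1 hmidne
          (hCb.subset (hGck x hx).2.2.2) (hCb.subset hmidsub))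
      have hAB : hausdorffDist (F (Φf x)) (F (Φf y)) ≤ L * ‖Φf x - Φf y‖ :=
        hFL _ hΦxC _ hΦyC
      have hABn : 0 ≤ hausdorffDist (F (Φf x)) (F (Φf y)) := hausdorffDist_nonneg
      rcases lt_or_ge ‖x - ξ‖ r with hcase | hcase
      · -- x is close to ξ
        have hKA : hausdorffDist K (F (Φf x)) ≤ ρ := by
          rw [Φxi_eq x hcase]; exact hKF.le
        have hnorm : ‖Φf x - Φf y‖ = pg r R ‖y - ξ‖ * ‖y - ξ‖ := by
          have h5 : Φf x - Φf y = -(pg r R ‖y - ξ‖ • (y - ξ)) := by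
            rw [Φxi_eq x hcase, hΦf]; simp only; abel
          rw [h5, norm_neg, norm_smul, Real.norm_eq_abs, abs_of_nonneg (pg_nonneg _ _ _)]
        have hP : pg r R ‖y - ξ‖ * ‖y - ξ‖ ≤ R * max 0 (‖y - ξ‖ - r) / (R - r) :=
          pg_mul_self_le hr hrR (norm_nonneg _)
        have hlamdiff : lam x - lam y = (min ‖y - ξ‖ r - ‖x - ξ‖) / r := by
          rw [hlam]; simp only; rw [min_eq_left hcase.le]; ring
        have hm1 : 0 ≤ min ‖y - ξ‖ r - ‖x - ξ‖ :=
          sub_nonneg.2 (le_min hxy hcase.le)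
        have hm2 : 0 ≤ max 0 (‖y - ξ‖ - r) := le_max_left _ _
        have hsum : min ‖y - ξ‖ r - ‖x - ξ‖ + max 0 (‖y - ξ‖ - r) = ‖y - ξ‖ - ‖x - ξ‖ := by
          rcases le_total ‖y - ξ‖ r with h | h
          · rw [min_eq_left h, max_eq_left (by linarith)]; ring
          · rw [min_eq_right h, max_eq_right (by linarith)]; ring
        have hd : ‖y - ξ‖ - ‖x - ξ‖ ≤ ‖x - y‖ := by
          have h6 := abs_norm_sub_norm_le (y - ξ) (x - ξ)
          rw [show (y - ξ) - (x - ξ) = y - x from by abel] at h6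
          rw [norm_sub_rev x y]
          exact le_trans (le_abs_self _) h6
        have c1 : (lam x - lam y) * hausdorffDist K (F (Φf x)) ≤
            ρ / r * (min ‖y - ξ‖ r - ‖x - ξ‖) := by
          rw [hlamdiff]
          calc (min ‖y - ξ‖ r - ‖x - ξ‖) / r * hausdorffDist K (F (Φf x))
              ≤ (min ‖y - ξ‖ r - ‖x - ξ‖) / r * ρ :=
                mul_le_mul_of_nonneg_left hKA (div_nonneg hm1 hr.le)
            _ = ρ / r * (min ‖y - ξ‖ r - ‖x - ξ‖) := by ring
        have c2 : (1 - lam y) * hausdorffDist (F (Φf x)) (F (Φf y)) ≤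
            R / (R - r) * L * max 0 (‖y - ξ‖ - r) := by
          have h7 : (1 - lam y) * hausdorffDist (F (Φf x)) (F (Φf y)) ≤
              hausdorffDist (F (Φf x)) (F (Φf y)) := by
            nlinarith [lam_nonneg y]
          refine h7.trans (hAB.trans ?_)
          rw [hnorm]
          calc L * (pg r R ‖y - ξ‖ * ‖y - ξ‖) ≤ L * (R * max 0 (‖y - ξ‖ - r) / (R - r)) :=
              mul_le_mul_of_nonneg_left hP hL0
            _ = R / (R - r) * L * max 0 (‖y - ξ‖ - r) := by ring
        have cc1 : ρ / r * (min ‖y - ξ‖ r - ‖x - ξ‖) ≤ M * (min ‖y - ξ‖ r - ‖x - ξ‖) :=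
          mul_le_mul_of_nonneg_right hMρr hm1
        have cc2 : R / (R - r) * L * max 0 (‖y - ξ‖ - r) ≤ M * max 0 (‖y - ξ‖ - r) :=
          mul_le_mul_of_nonneg_right hM1 hm2
        have cc3 : M * (min ‖y - ξ‖ r - ‖x - ξ‖) + M * max 0 (‖y - ξ‖ - r) ≤ M * ‖x - y‖ := by
          rw [← mul_add, hsum]
          exact mul_le_mul_of_nonneg_left hd hM0
        linarith
      · -- x is far from ξ
        have hlx0 : lam x = 0 := lam_zero x hcase
        have hly0 : lam y = 0 := lam_zero y (le_trans hcase hxy)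
        have c1 : (lam x - lam y) * hausdorffDist K (F (Φf x)) = 0 := by
          rw [hlx0, hly0]; ring
        have c2 : (1 - lam y) * hausdorffDist (F (Φf x)) (F (Φf y)) ≤
            R / (R - r) * L * ‖x - y‖ := by
          rw [hly0, sub_zero, one_mul]
          refine hAB.trans ?_
          calc L * ‖Φf x - Φf y‖ ≤ L * (R / (R - r) * ‖x - y‖) :=
              mul_le_mul_of_nonneg_left (Φlip x y) hL0
            _ = R / (R - r) * L * ‖x - y‖ := by ring
        have cc2 : R / (R - r) * L * ‖x - y‖ ≤ M * ‖x - y‖ :=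
          mul_le_mul_of_nonneg_right hM1 (norm_nonneg _)
        linarith
    intro x hx y hy
    rcases le_total ‖x - ξ‖ ‖y - ξ‖ with h | h
    · exact key x hx y hy h
    · rw [hausdorffDist_comm, norm_sub_rev]
      exact key y hy x hx h
  · -- distance to F
    intro x hx
    have hΦxC := Φmem x hx
    have hAne := hFne _ hΦxC
    have hAb : Bornology.IsBounded (F (Φf x)) := hCb.subset (hFsub _ hΦxC)
    have hAco := hFco _ hΦxC
    have hxb : Bornology.IsBounded (F x) := hCb.subset (hFsub _ hx)
    have h1lx : 0 ≤ 1 - lam x := by linarith [lam_le_one x]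
    have tri : hausdorffDist (F x) (G x) ≤
        hausdorffDist (F x) (F (Φf x)) + hausdorffDist (F (Φf x)) (G x) :=
      hausdorffDist_triangle (hfin _ _ (hFne _ hx) hAne hxb hAb)
    have b1 : hausdorffDist (F x) (F (Φf x)) ≤ r := by
      refine (hFL x hx _ hΦxC).trans ?_
      calc L * ‖x - Φf x‖ ≤ 1 * r :=
          mul_le_mul hL1 (Φdist x) (norm_nonneg _) zero_le_one
        _ = r := one_mul r
    have b2 : hausdorffDist (F (Φf x)) (G x) ≤ ρ := by
      have eA : F (Φf x) = lam x • F (Φf x) + (1 - lam x) • F (Φf x) := by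
        rw [← Convex.add_smul hAco (lam_nonneg x) h1lx,
          show lam x + (1 - lam x) = 1 from by ring, one_smul]
      have hstep : hausdorffDist (F (Φf x)) (G x) ≤
          lam x * hausdorffDist (F (Φf x)) K := by
        rw [hGx]
        nth_rewrite 1 [eA]
        rw [add_comm (lam x • F (Φf x)), add_comm (lam x • K)]
        refine (aux_hd_add_left _ _ _ (hAne.smul_set) (hAne.smul_set) (hKne.smul_set)
          (hAb.smul₀ _) (hKb.smul₀ _)).trans ?_
        exact aux_hd_smul _ (lam_nonneg x) _ _ hAne hKne hAb hKb
      rcases eq_or_lt_of_le (lam_nonneg x) with h0 | h0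
      · rw [← h0, zero_mul] at hstep
        linarith
      · have hlt := lam_pos_lt x h0
        have hAK : hausdorffDist (F (Φf x)) K ≤ ρ := by
          rw [Φxi_eq x hlt, hausdorffDist_comm]
          exact hKF.le
        have : lam x * hausdorffDist (F (Φf x)) K ≤ 1 * ρ :=
          mul_le_mul (lam_le_one x) hAK hausdorffDist_nonneg zero_le_one
        linarith
    linarith
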